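/- For fixed n ≥ 4, the map sending an integer x ≥ 3 to Y_n(x) is injective, where Y_n(x) := Σ_{i=2}^{x-1} [ C(n+x-2, n-1) − C(n+x−i−1, n−1) ]. Consequently, a free tree braid group of known rank r = Y_n(x) on a known number n ≥ 4 of strands uniquely determines the degree x of the essential vertex of the radial defining tree. -/

import Mathlib

/-- `Y n x = Σ_{i=2}^{x-1} ( C(n+x-2, n-1) − C(n+x−i−1, n−1) )`, the rank of the
`n`-strand braid group of a radial tree whose essential vertex has degree `x`. -/
def Y (n x : ℕ) : ℕ :=
  ∑ i ∈ Finset.Icc 2 (x - 1), (Nat.choose (n + x - 2) (n - 1) - Nat.choose (n + x - i - 1) (n - 1))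

/-- Reindexed form of `Y`. -/
def Z (n x : ℕ) : ℕ :=
  ∑ k ∈ Finset.range (x - 2), (Nat.choose (n + x - 2) (n - 1) - Nat.choose (n + k) (n - 1))

lemma Y_eq_Z (n x : ℕ) : Y n x = Z n x := by
  unfold Y Z
  refine Finset.sum_nbij' (fun i => x - 1 - i) (fun k => x - 1 - k) ?_ ?_ ?_ ?_ ?_
  · intro i hi
    simp only [Finset.mem_Icc] at hi
    simp only [Finset.mem_range]
    omega
  · intro k hk
    simp only [Finset.mem_range] at hk
    simp only [Finset.mem_Icc]
    omega
  · intro i hi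
    simp only [Finset.mem_Icc] at hi
    try dsimp only
    omega
  · intro k hk
    simp only [Finset.mem_range] at hk
    try dsimp only
    omega
  · intro i hi
    simp only [Finset.mem_Icc] at hi
    try dsimp only
    congr 2
    omega

lemma Z_lt_succ (n x : ℕ) (hn : 4 ≤ n) (hx : 3 ≤ x) : Z n x < Z n (x + 1) := by
  unfold Z
  have hx2 : x + 1 - 2 = (x - 2) + 1 := by omega
  rw [hx2, Finset.sum_range_succ]
  have h1 : ∑ k ∈ Finset.range (x - 2), (Nat.choose (n + x - 2) (n - 1) - Nat.choose (n + k) (n - 1))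
      ≤ ∑ k ∈ Finset.range (x - 2), (Nat.choose (n + (x + 1) - 2) (n - 1) - Nat.choose (n + k) (n - 1)) := by
    apply Finset.sum_le_sum
    intro k _
    apply Nat.sub_le_sub_right
    exact Nat.choose_le_choose _ (by omega)
  have h2 : 0 < Nat.choose (n + (x + 1) - 2) (n - 1) - Nat.choose (n + (x - 2)) (n - 1) := by
    have e1 : n + (x + 1) - 2 = (n + (x - 2)) + 1 := by omega
    have e2 : n - 1 = (n - 2) + 1 := by omega
    rw [e1, e2, Nat.choose_succ_succ']
    have : 0 < Nat.choose (n + (x - 2)) (n - 2) := Nat.choose_pos (by omega)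
    omega
  omega

lemma Z_strict (n : ℕ) (hn : 4 ≤ n) : ∀ x x' : ℕ, 3 ≤ x → x < x' → Z n x < Z n x' := by
  intro x x' hx h
  induction x' with
  | zero => omega
  | succ y ih =>
    rcases Nat.lt_or_ge x y with h'| h'
    · exact lt_trans (ih h') (Z_lt_succ n y hn (by omega))
    · have : x = y := by omega
      subst this
      exact Z_lt_succ n x hn hx

theorem Y_injective_in_x (n : ℕ) (hn : 4 ≤ n) :
    ∀ x x' : ℕ, 3 ≤ x → 3 ≤ x' → Y n x = Y n x' → x = x' := by
  intro x x' hx hx' h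
  rw [Y_eq_Z, Y_eq_Z] at h
  rcases lt_trichotomy x x' with h1 | h1 | h1
  · exact absurd h (Nat.ne_of_lt (Z_strict n hn x x' hx h1))
  · exact h1
  · exact absurd h.symm (Nat.ne_of_lt (Z_strict n hn x' x hx' h1))
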